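/- In a Baire base, a set A is non-Baire if and only if A is completely non-Baire in some region D, meaning: A ∩ D ≠ ∅ ≠ D − A and for every Baire set B with B ∩ D abundant, both A ∩ B ∩ D and (D − A) ∩ B are abundant. -/
import Mathlib


structure CatBase (X : Type*) where
  regions : Set (Set X)
  nonempty_X : Nonempty X
  cover : ∀ x : X, ∃ A ∈ regions, x ∈ A
  ax2 : ∀ A ∈ regions, ∀ D : Set (Set X), D ⊆ regions → D.Nonempty →
    D.Pairwise Disjoint → Cardinal.mk D < Cardinal.mk regions →
    ((∃ B ∈ regions, B ⊆ A ∩ ⋃₀ D) → ∃ C ∈ D, ∃ B ∈ regions, B ⊆ A ∩ C) ∧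
    (¬ (∃ B ∈ regions, B ⊆ A ∩ ⋃₀ D) →
      ∃ B ∈ regions, B ⊆ A ∧ ∀ C ∈ D, Disjoint B C)

namespace CatBase

variable {X : Type*}

/-- A set is singular if every region contains a subregion disjoint from it. -/
def Singular (cb : CatBase X) (S : Set X) : Prop :=
  ∀ A ∈ cb.regions, ∃ B ∈ cb.regions, B ⊆ A ∧ Disjoint B S

/-- A set is meager if it is a countable union of singular sets. -/
def Meager (cb : CatBase X) (S : Set X) : Prop :=
  ∃ f : ℕ → Set X, (∀ n, cb.Singular (f n)) ∧ S = ⋃ n, f n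

def Abundant (cb : CatBase X) (S : Set X) : Prop := ¬ cb.Meager S

/-- A set is Baire if every region has a subregion in which the set or its complement is meager. -/
def Baire (cb : CatBase X) (S : Set X) : Prop :=
  ∀ A ∈ cb.regions, ∃ B ∈ cb.regions, B ⊆ A ∧
    (cb.Meager (S ∩ B) ∨ cb.Meager (Sᶜ ∩ B))

end CatBase

namespace CatBase

variable {X : Type*}

variable (cb : CatBase X)

lemma singular_mono {S T : Set X} (h : cb.Singular S) (hsub : T ⊆ S) : cb.Singular T := by
  intro A hA
  obtain ⟨B, hB, hBA, hd⟩ := h A hA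
  exact ⟨B, hB, hBA, hd.mono_right hsub⟩

lemma singular_empty : cb.Singular (∅ : Set X) := by
  intro A hA; exact ⟨A, hA, subset_rfl, disjoint_bot_right⟩

lemma meager_mono {S T : Set X} (h : cb.Meager S) (hsub : T ⊆ S) : cb.Meager T := by
  obtain ⟨f, hf, rfl⟩ := h
  refine ⟨fun n => f n ∩ T, fun n => cb.singular_mono (hf n) Set.inter_subset_left, ?_⟩
  rw [← Set.iUnion_inter]
  exact (Set.inter_eq_right.mpr hsub).symm

lemma meager_empty : cb.Meager (∅ : Set X) :=
  ⟨fun _ => ∅, fun _ => cb.singular_empty, by simp⟩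

lemma abundant_mono {S T : Set X} (h : cb.Abundant S) (hsub : S ⊆ T) : cb.Abundant T :=
  fun hm => h (cb.meager_mono hm hsub)

lemma baire_univ : cb.Baire (Set.univ : Set X) := by
  intro A hA
  refine ⟨A, hA, subset_rfl, Or.inr ?_⟩
  simpa using cb.meager_empty

lemma meager_union {S T : Set X} (hS : cb.Meager S) (hT : cb.Meager T) :
    cb.Meager (S ∪ T) := by
  obtain ⟨f, hf, rfl⟩ := hS
  obtain ⟨g, hg, rfl⟩ := hT
  refine ⟨fun n => if Even n then f (n / 2) else g (n / 2), fun n => ?_, ?_⟩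
  · by_cases h : Even n <;> simp [h, hf, hg]
  · ext x
    simp only [Set.mem_union, Set.mem_iUnion]
    constructor
    · rintro (⟨n, hn⟩ | ⟨n, hn⟩)
      · exact ⟨2 * n, by simp [Nat.mul_div_cancel_left n (by norm_num : 0 < 2), hn]⟩
      · refine ⟨2 * n + 1, ?_⟩
        have : ¬ Even (2 * n + 1) := by simp [Nat.even_add_one, Nat.even_mul]
        simpa [this, Nat.mul_add_div, Nat.mul_div_cancel_left] using hn
    · rintro ⟨n, hn⟩
      by_cases h : Even n
      · simp only [h, if_true] at hn; exact Or.inl ⟨n / 2, hn⟩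
      · simp only [h, if_false] at hn; exact Or.inr ⟨n / 2, hn⟩


open Classical in
noncomputable def ftStep (cb : CatBase X) (D S : Set X)
    (r : ↥cb.regions → ↥cb.regions → Prop)
    (a : ↥cb.regions) (IH : ∀ b, r b a → Option (Set X)) : Option (Set X) :=
  if h2 : ∃ C, C ∈ cb.regions ∧ C ⊆ (a : Set X) ∧ C ⊆ D ∧ cb.Meager (S ∩ C) ∧
      ∀ C' ∈ {C' | ∃ b, ∃ h : r b a, IH b h = some C'}, Disjoint C C'
  then some h2.choose else none

lemma locFT (cb : CatBase X) (hB : ∀ A ∈ cb.regions, cb.Abundant A) {D : Set X}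
    (hD : D ∈ cb.regions) {S : Set X} (hS : S ⊆ D)
    (hyp : ∀ E ∈ cb.regions, E ⊆ D → ∃ C ∈ cb.regions, C ⊆ E ∧ cb.Meager (S ∩ C)) :
    cb.Meager S := by
  classical
  obtain ⟨r, wo, hr⟩ := Cardinal.ord_eq (↥cb.regions)
  haveI := wo
  have wf : WellFounded r := wo.wf
  let E : ↥cb.regions → Option (Set X) := wf.fix (ftStep cb D S r)
  have hfix : ∀ a, E a = ftStep cb D S r a (fun b _ => E b) := fun a =>
    wf.fix_eq (ftStep cb D S r) a
  set Fam : ↥cb.regions → Set (Set X) :=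
    fun a => {C' | ∃ b, ∃ h : r b a, E b = some C'} with hFam
  -- properties of chosen sets
  have hsome : ∀ a C, E a = some C → C ∈ cb.regions ∧ C ⊆ (a : Set X) ∧ C ⊆ D ∧
      cb.Meager (S ∩ C) ∧ ∀ C' ∈ Fam a, Disjoint C C' := by
    intro a C h
    rw [hfix a] at h
    unfold ftStep at h
    split_ifs at h with h2
    · obtain rfl : h2.choose = C := Option.some.inj h
      exact h2.choose_spec
  set Dset : Set (Set X) := {C | ∃ a, E a = some C} with hDset
  have hDsub : Dset ⊆ cb.regions := by
    rintro C ⟨a, ha⟩; exact (hsome a C ha).1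
  have hDD : ∀ C ∈ Dset, C ⊆ D := by
    rintro C ⟨a, ha⟩; exact (hsome a C ha).2.2.1
  have hDM : ∀ C ∈ Dset, cb.Meager (S ∩ C) := by
    rintro C ⟨a, ha⟩; exact (hsome a C ha).2.2.2.1
  have hpair : Dset.Pairwise Disjoint := by
    rintro C ⟨a, ha⟩ C' ⟨a', ha'⟩ hne
    rcases trichotomous_of r a a' with h | h | h
    · exact ((hsome a' C' ha').2.2.2.2 C ⟨a, h, ha⟩).symm
    · exact absurd (by rw [← h] at ha'; rw [ha'] at ha; exact (Option.some.inj ha).symm) hne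
    · exact (hsome a C ha).2.2.2.2 C' ⟨a', h, ha'⟩
  have hFamsub : ∀ a, Fam a ⊆ Dset := by
    rintro a C ⟨b, hb, hEb⟩; exact ⟨b, hEb⟩
  have hcard : ∀ a : ↥cb.regions, Cardinal.mk ↥(Fam a) < Cardinal.mk ↥cb.regions := by
    intro a
    have h1 : Fam a ⊆ Set.range (fun b : {b // r b a} => (E ↑b).getD ∅) := by
      rintro C ⟨b, hb, hEb⟩
      exact ⟨⟨b, hb⟩, by simp [hEb]⟩
    calc Cardinal.mk ↥(Fam a) ≤ Cardinal.mk ↥(Set.range fun b : {b // r b a} => (E ↑b).getD ∅) :=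
          Cardinal.mk_le_mk_of_subset h1
      _ ≤ Cardinal.mk {b // r b a} := Cardinal.mk_range_le
      _ = (Ordinal.typein r a).card := Ordinal.card_typein a
      _ < Cardinal.mk ↥cb.regions := by
          rw [← Cardinal.lt_ord] at *
          rw [hr]
          exact hr ▸ Ordinal.typein_lt_type r a
  -- the case analysis at each region
  have hcase : ∀ a : ↥cb.regions,
      (∃ C ∈ Dset, ∃ B ∈ cb.regions, B ⊆ (a : Set X) ∩ C) ∨
      (∃ B ∈ cb.regions, B ⊆ (a : Set X) ∧ Disjoint B D) := by
    intro a
    by_cases h1 : ∃ B ∈ cb.regions, B ⊆ (a : Set X) ∩ ⋃₀ (Fam a)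
    · -- case I
      have hne : (Fam a).Nonempty := by
        by_contra hne
        rw [Set.not_nonempty_iff_eq_empty] at hne
        obtain ⟨B, hBreg, hBsub⟩ := h1
        rw [hne] at hBsub
        simp only [Set.sUnion_empty, Set.inter_empty, Set.subset_empty_iff] at hBsub
        exact hB B hBreg (hBsub ▸ cb.meager_empty)
      obtain ⟨C, hC, B, hBreg, hBsub⟩ :=
        ((cb.ax2 (a : Set X) a.2 (Fam a) (fun C hC => hDsub (hFamsub a hC))
          hne (hpair.mono (hFamsub a)) (hcard a)).1 h1)
      exact Or.inl ⟨C, hFamsub a hC, B, hBreg, hBsub⟩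
    · -- case II : get B ⊆ a disjoint from the family
      obtain ⟨B, hBreg, hBa, hBdisj⟩ :
          ∃ B ∈ cb.regions, B ⊆ (a : Set X) ∧ ∀ C ∈ Fam a, Disjoint B C := by
        rcases Set.eq_empty_or_nonempty (Fam a) with he | hne
        · exact ⟨(a : Set X), a.2, subset_rfl, by rw [he]; simp⟩
        · obtain ⟨B, hBreg, hBa, hBd⟩ :=
            ((cb.ax2 (a : Set X) a.2 (Fam a) (fun C hC => hDsub (hFamsub a hC))
              hne (hpair.mono (hFamsub a)) (hcard a)).2 h1)
          exact ⟨B, hBreg, hBa, hBd⟩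
      by_cases hF : ∃ F ∈ cb.regions, F ⊆ B ∩ D
      · -- then stage a added a member
        obtain ⟨F, hFreg, hFsub⟩ := hF
        obtain ⟨F', hF'reg, hF'sub, hF'M⟩ :=
          hyp F hFreg (hFsub.trans Set.inter_subset_right)
        have h2 : ∃ C, C ∈ cb.regions ∧ C ⊆ (a : Set X) ∧ C ⊆ D ∧ cb.Meager (S ∩ C) ∧
            ∀ C' ∈ Fam a, Disjoint C C' := by
          refine ⟨F', hF'reg, ?_, ?_, hF'M, ?_⟩
          · exact (hF'sub.trans (hFsub.trans Set.inter_subset_left)).trans hBa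
          · exact hF'sub.trans (hFsub.trans Set.inter_subset_right)
          · intro C' hC'
            exact (hBdisj C' hC').mono_left (hF'sub.trans (hFsub.trans Set.inter_subset_left))
        have hEa : ∃ C, E a = some C := by
          refine ⟨h2.choose, ?_⟩
          rw [hfix a]
          unfold ftStep
          exact dif_pos h2
        obtain ⟨C, hEa⟩ := hEa
        obtain ⟨hC1, hC2, _, _, _⟩ := hsome a C hEa
        exact Or.inl ⟨C, ⟨a, hEa⟩, C, hC1, Set.subset_inter (hC2) subset_rfl⟩
      · -- no region inside B ∩ D : get a subregion of B disjoint from D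
        by_cases hnt : Nontrivial ↥cb.regions
        · have hsing : Cardinal.mk ↥({D} : Set (Set X)) < Cardinal.mk ↥cb.regions := by
            rw [Cardinal.mk_singleton]
            exact Cardinal.one_lt_iff_nontrivial.2 hnt
          have hax := (cb.ax2 B hBreg {D} (by simpa using hD) ⟨D, rfl⟩
            (Set.pairwise_singleton D Disjoint) hsing).2
          rw [Set.sUnion_singleton] at hax
          obtain ⟨B', hB'reg, hB'sub, hB'd⟩ := hax hF
          exact Or.inr ⟨B', hB'reg, hB'sub.trans hBa, hB'd D rfl⟩
        · exfalso
          have : Subsingleton ↥cb.regions := not_nontrivial_iff_subsingleton.1 hnt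
          have hDB : D = B := congrArg Subtype.val (Subsingleton.elim
            (⟨D, hD⟩ : ↥cb.regions) ⟨B, hBreg⟩)
          exact hF ⟨B, hBreg, Set.subset_inter subset_rfl (hDB ▸ subset_rfl)⟩
  -- pieces of the members
  have hpieces : ∀ C (hC : C ∈ Dset), ∃ g : ℕ → Set X,
      (∀ n, cb.Singular (g n)) ∧ (∀ n, g n ⊆ S ∩ C) ∧ S ∩ C = ⋃ n, g n := by
    intro C hC
    obtain ⟨f, hf, hfe⟩ := hDM C hC
    refine ⟨fun n => f n ∩ (S ∩ C), fun n => cb.singular_mono (hf n) Set.inter_subset_left,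
      fun n => Set.inter_subset_right, ?_⟩
    rw [← Set.iUnion_inter, ← hfe, Set.inter_self]
  choose g hg1 hg2 hg3 using hpieces
  set T : ℕ → Set X := fun n => ⋃ (C : Set X) (hC : C ∈ Dset), g C hC n with hT
  have hTsub : ∀ n, T n ⊆ S := by
    intro n x hx
    simp only [hT, Set.mem_iUnion] at hx
    obtain ⟨C, hC, hx⟩ := hx
    exact (hg2 C hC n hx).1
  have hTsing : ∀ n, cb.Singular (T n) := by
    intro n A hA
    rcases hcase ⟨A, hA⟩ with ⟨C, hC, B, hBreg, hBsub⟩ | ⟨B, hBreg, hBsub, hBd⟩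
    · obtain ⟨B', hB'reg, hB'sub, hB'd⟩ := hg1 C hC n B hBreg
      refine ⟨B', hB'reg, hB'sub.trans (hBsub.trans Set.inter_subset_left), ?_⟩
      rw [Set.disjoint_left]
      intro x hxB' hxT
      simp only [hT, Set.mem_iUnion] at hxT
      obtain ⟨C', hC', hx⟩ := hxT
      by_cases hCC : C' = C
      · subst hCC
        exact Set.disjoint_left.1 hB'd hxB' hx
      · have hx1 : x ∈ C := (hBsub (hB'sub hxB')).2
        have hx2 : x ∈ C' := (hg2 C' hC' n hx).2
        exact Set.disjoint_left.1 (hpair hC' hC hCC) hx2 hx1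
    · refine ⟨B, hBreg, hBsub, hBd.mono_right ?_⟩
      intro x hx
      simp only [hT, Set.mem_iUnion] at hx
      obtain ⟨C, hC, hx⟩ := hx
      exact hDD C hC (hg2 C hC n hx).2
  have hRsing : cb.Singular (S \ ⋃₀ Dset) := by
    intro A hA
    rcases hcase ⟨A, hA⟩ with ⟨C, hC, B, hBreg, hBsub⟩ | ⟨B, hBreg, hBsub, hBd⟩
    · refine ⟨B, hBreg, hBsub.trans Set.inter_subset_left, ?_⟩
      rw [Set.disjoint_left]
      intro x hxB hxR
      exact hxR.2 ⟨C, hC, (hBsub hxB).2⟩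
    · exact ⟨B, hBreg, hBsub, hBd.mono_right (Set.diff_subset.trans hS)⟩
  refine ⟨fun n => Nat.rec (S \ ⋃₀ Dset) (fun m _ => T m) n, fun n => ?_, ?_⟩
  · cases n with
    | zero => exact hRsing
    | succ m => exact hTsing m
  · ext x
    simp only [Set.mem_iUnion]
    constructor
    · intro hx
      by_cases hxD : x ∈ ⋃₀ Dset
      · obtain ⟨C, hC, hxC⟩ := hxD
        have : x ∈ ⋃ n, g C hC n := (hg3 C hC) ▸ (⟨hx, hxC⟩ : x ∈ S ∩ C)
        obtain ⟨n, hn⟩ := Set.mem_iUnion.1 this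
        exact ⟨n + 1, Set.mem_iUnion.2 ⟨C, Set.mem_iUnion.2 ⟨hC, hn⟩⟩⟩
      · exact ⟨0, hx, hxD⟩
    · rintro ⟨n, hn⟩
      cases n with
      | zero => exact hn.1
      | succ m => exact hTsub m hn

end CatBase


theorem stmt11 {X : Type*} (cb : CatBase X)
    (hBaire : ∀ A ∈ cb.regions, cb.Abundant A) (A : Set X) :
    ¬ cb.Baire A ↔
      ∃ D ∈ cb.regions, (A ∩ D).Nonempty ∧ (D \ A).Nonempty ∧
        ∀ B : Set X, cb.Baire B → cb.Abundant (B ∩ D) →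
          cb.Abundant (A ∩ B ∩ D) ∧ cb.Abundant ((D \ A) ∩ B) := by
  constructor
  · intro hnb
    rw [CatBase.Baire] at hnb
    push_neg at hnb
    obtain ⟨D, hD, hprop⟩ := hnb
    have hA1 : ∀ C ∈ cb.regions, C ⊆ D →
        cb.Abundant (A ∩ C) ∧ cb.Abundant (Aᶜ ∩ C) := fun C hC hCD => hprop C hC hCD
    refine ⟨D, hD, ?_, ?_, ?_⟩
    · by_contra h
      rw [Set.not_nonempty_iff_eq_empty] at h
      exact (hA1 D hD subset_rfl).1 (h ▸ cb.meager_empty)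
    · by_contra h
      rw [Set.not_nonempty_iff_eq_empty] at h
      have : Aᶜ ∩ D = ∅ := by rw [Set.inter_comm, ← Set.diff_eq]; exact h
      exact (hA1 D hD subset_rfl).2 (this ▸ cb.meager_empty)
    · intro B hBB hBD
      have key : ∃ C ∈ cb.regions, C ⊆ D ∧ cb.Meager (Bᶜ ∩ C) := by
        by_contra hkey
        push_neg at hkey
        refine hBD (cb.locFT hBaire hD Set.inter_subset_right ?_)
        intro E hE hED
        obtain ⟨C', hC', hsub, hM⟩ := hBB E hE
        rcases hM with hM | hM
        · exact ⟨C', hC', hsub, cb.meager_mono hM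
            (Set.inter_subset_inter_left _ Set.inter_subset_left)⟩
        · exact absurd hM (hkey C' hC' (hsub.trans hED))
      obtain ⟨C, hC, hCD, hM⟩ := key
      constructor
      · intro hm
        refine (hA1 C hC hCD).1 (cb.meager_mono (cb.meager_union hm hM) ?_)
        rintro x ⟨hxA, hxC⟩
        by_cases hxB : x ∈ B
        · exact Or.inl ⟨⟨hxA, hxB⟩, hCD hxC⟩
        · exact Or.inr ⟨hxB, hxC⟩
      · intro hm
        refine (hA1 C hC hCD).2 (cb.meager_mono (cb.meager_union hm hM) ?_)
        rintro x ⟨hxA, hxC⟩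
        by_cases hxB : x ∈ B
        · exact Or.inl ⟨⟨hCD hxC, hxA⟩, hxB⟩
        · exact Or.inr ⟨hxB, hxC⟩
  · rintro ⟨D, hD, hne1, hne2, hprop⟩ hBA
    have h1 := hprop Set.univ (cb.baire_univ) (by
      rw [Set.univ_inter]; exact hBaire D hD)
    have hAD : cb.Abundant (A ∩ D) := by
      have := h1.1
      rwa [Set.inter_univ] at this
    have h2 := hprop A hBA hAD
    have : (D \ A) ∩ A = ∅ := by
      ext x; simp (config := { contextual := true }) [Set.mem_diff]
    exact h2.2 (this ▸ cb.meager_empty)
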